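/- Let (p_n)_{n≥1} be a strictly increasing sequence of positive real numbers tending to infinity, and let (α_n)_{n≥1} be real numbers with ∑_{n=1}^∞ |α_n| < ∞. If ∑_{n=1}^∞ α_n cos(p_n t) = 0 for every t > 0, then α_n = 0 for every n ≥ 1. -/

import Mathlib

open Real Filter
open MeasureTheory intervalIntegral Topology

lemma int_cos_gen (a T : ℝ) :
    ∫ t in (0:ℝ)..T, Real.cos (a * t) = if a = 0 then T else Real.sin (a * T) / a := by
  rcases eq_or_ne a 0 with rfl | ha
  · simp
  · have := intervalIntegral.integral_comp_mul_left (a := (0:ℝ)) (b := T)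
      (fun x => Real.cos x) ha
    simp only [mul_zero, integral_cos, Real.sin_zero, sub_zero, smul_eq_mul] at this
    rw [this, if_neg ha, div_eq_inv_mul]

lemma int_cos_cos (a b T : ℝ) :
    ∫ t in (0:ℝ)..T, Real.cos (a * t) * Real.cos (b * t)
      = ((if a - b = 0 then T else Real.sin ((a - b) * T) / (a - b))
        + (if a + b = 0 then T else Real.sin ((a + b) * T) / (a + b))) / 2 := by
  have hpt : ∀ t : ℝ, Real.cos (a * t) * Real.cos (b * t)
      = (Real.cos ((a - b) * t) + Real.cos ((a + b) * t)) / 2 := by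
    intro t
    have h := Real.two_mul_cos_mul_cos (a * t) (b * t)
    rw [show a * t - b * t = (a - b) * t by ring, show a * t + b * t = (a + b) * t by ring] at h
    linarith
  have hi1 : IntervalIntegrable (fun t => Real.cos ((a - b) * t)) volume 0 T :=
    (Real.continuous_cos.comp (continuous_const.mul continuous_id)).intervalIntegrable _ _
  have hi2 : IntervalIntegrable (fun t => Real.cos ((a + b) * t)) volume 0 T :=
    (Real.continuous_cos.comp (continuous_const.mul continuous_id)).intervalIntegrable _ _
  rw [intervalIntegral.integral_congr (fun t _ => hpt t), intervalIntegral.integral_div,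
    intervalIntegral.integral_add hi1 hi2, int_cos_gen, int_cos_gen]

lemma sin_div_tendsto (b : ℝ) :
    Tendsto (fun T : ℝ => Real.sin (b * T) / T) atTop (𝓝 0) := by
  have h1 : Tendsto (fun T : ℝ => |T|⁻¹) atTop (𝓝 0) :=
    tendsto_inv_atTop_zero.comp tendsto_abs_atTop_atTop
  refine squeeze_zero_norm (fun T => ?_) h1
  rw [norm_div, Real.norm_eq_abs, Real.norm_eq_abs, div_eq_mul_inv]
  calc |Real.sin (b*T)| * |T|⁻¹ ≤ 1 * |T|⁻¹ := by
        gcongr; exact Real.abs_sin_le_one _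
    _ = |T|⁻¹ := one_mul _

lemma term_tendsto (a : ℝ) :
    Tendsto (fun T : ℝ => (if a = 0 then T else Real.sin (a * T) / a) / T) atTop
      (𝓝 (if a = 0 then 1 else 0)) := by
  rcases eq_or_ne a 0 with rfl | ha
  · simp only [if_pos rfl]
    refine Tendsto.congr' ?_ tendsto_const_nhds
    filter_upwards [eventually_ne_atTop 0] with T hT
    exact (div_self hT).symm
  · simp only [if_neg ha]
    have := (sin_div_tendsto a).div_const a
    rw [zero_div] at this
    refine this.congr fun T => ?_
    rw [div_right_comm]

theorem cosine_series_uniqueness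
    (p : ℕ → ℝ) (hmono : StrictMono p) (hpos : ∀ n, 0 < p n)
    (htop : Tendsto p atTop atTop)
    (α : ℕ → ℝ) (hsum : Summable (fun n => |α n|))
    (hzero : ∀ t : ℝ, 0 < t → ∑' n, α n * Real.cos (p n * t) = 0) :
    ∀ n, α n = 0 := by
  intro k
  set c : ℕ → ℝ → ℝ :=
    fun n T => ∫ t in (0:ℝ)..T, Real.cos (p n * t) * Real.cos (p k * t) with hc
  -- Step 1: for T > 0, the weighted sum of coefficients vanishes
  have hzeroT : ∀ T : ℝ, 0 < T → ∑' n, α n * (2 / T * c n T) = 0 := by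
    intro T hT
    have hstep : ∑' n, α n * c n T = 0 := by
      have heq : ∀ n, α n * c n T
          = ∫ t in Set.Ioc (0:ℝ) T, α n * (Real.cos (p n * t) * Real.cos (p k * t)) := by
        intro n
        rw [hc, ← intervalIntegral.integral_const_mul,
          intervalIntegral.integral_of_le hT.le]
      rw [tsum_congr heq]
      have hcont : ∀ n : ℕ, Continuous
          (fun t : ℝ => α n * (Real.cos (p n * t) * Real.cos (p k * t))) := fun n =>
        continuous_const.mul ((Real.continuous_cos.comp (continuous_const.mul continuous_id)).mul
          (Real.continuous_cos.comp (continuous_const.mul continuous_id)))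
      have hint : ∀ n : ℕ, Integrable
          (fun t : ℝ => α n * (Real.cos (p n * t) * Real.cos (p k * t)))
          (volume.restrict (Set.Ioc (0:ℝ) T)) := by
        intro n
        exact ((hcont n).integrableOn_Ioc : IntegrableOn _ _ volume)
      have hfin : volume (Set.Ioc (0:ℝ) T) < ⊤ := by
        rw [Real.volume_Ioc]; exact ENNReal.ofReal_lt_top
      have hsumint : Summable (fun n : ℕ =>
          ∫ t in Set.Ioc (0:ℝ) T, ‖α n * (Real.cos (p n * t) * Real.cos (p k * t))‖) := by
        refine Summable.of_nonneg_of_le (fun n => integral_nonneg fun t => norm_nonneg _)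
          (fun n => ?_) (hsum.mul_right T)
        have hb : ∀ t ∈ Set.Ioc (0:ℝ) T,
            ‖‖α n * (Real.cos (p n * t) * Real.cos (p k * t))‖‖ ≤ |α n| := by
          intro t _
          rw [norm_norm, norm_mul, Real.norm_eq_abs (α n)]
          calc |α n| * ‖Real.cos (p n * t) * Real.cos (p k * t)‖
              ≤ |α n| * 1 := by
                gcongr
                rw [norm_mul]
                calc ‖Real.cos (p n * t)‖ * ‖Real.cos (p k * t)‖ ≤ 1 * 1 := by
                      gcongr <;> [exact Real.abs_cos_le_one _; exact Real.abs_cos_le_one _]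
                  _ = 1 := one_mul 1
            _ = |α n| := mul_one _
        have := norm_setIntegral_le_of_norm_le_const (μ := volume) hfin hb
        rw [Real.norm_eq_abs, abs_of_nonneg (integral_nonneg fun t => norm_nonneg _)] at this
        calc (∫ t in Set.Ioc (0:ℝ) T, ‖α n * (Real.cos (p n * t) * Real.cos (p k * t))‖)
            ≤ |α n| * (volume (Set.Ioc (0:ℝ) T)).toReal := this
          _ = |α n| * T := by
                rw [Real.volume_Ioc, sub_zero, ENNReal.toReal_ofReal hT.le]
      rw [integral_tsum_of_summable_integral_norm hint hsumint]
      have hzero' : ∀ t ∈ Set.Ioc (0:ℝ) T,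
          (∑' n, α n * (Real.cos (p n * t) * Real.cos (p k * t))) = 0 := by
        intro t ht
        have : ∀ n, α n * (Real.cos (p n * t) * Real.cos (p k * t))
            = (α n * Real.cos (p n * t)) * Real.cos (p k * t) := fun n => by ring
        rw [tsum_congr this, tsum_mul_right, hzero t ht.1, zero_mul]
      rw [setIntegral_congr_fun measurableSet_Ioc hzero']
      simp
    have : ∀ n, α n * (2 / T * c n T) = (2 / T) * (α n * c n T) := fun n => by ring
    rw [tsum_congr this, tsum_mul_left, hstep, mul_zero]
  -- Step 2: each coefficient tends to the Kronecker delta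
  have hlim : ∀ n, Tendsto (fun T : ℝ => 2 / T * c n T) atTop
      (𝓝 (if n = k then 1 else 0)) := by
    intro n
    have hform : ∀ T : ℝ, T ≠ 0 → 2 / T * c n T
        = (if p n - p k = 0 then T else Real.sin ((p n - p k) * T) / (p n - p k)) / T
          + (if p n + p k = 0 then T else Real.sin ((p n + p k) * T) / (p n + p k)) / T := by
      intro T hT
      show 2 / T * (∫ t in (0:ℝ)..T, Real.cos (p n * t) * Real.cos (p k * t)) = _
      rw [int_cos_cos, sub_mul, add_mul]
      rcases eq_or_ne (p n - p k) 0 with h | h <;>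
        rcases eq_or_ne (p n + p k) 0 with h' | h' <;>
          simp only [if_pos, if_neg, h, h', if_true, if_false] <;> field_simp <;> ring
    have h1 := term_tendsto (p n - p k)
    have h2 := term_tendsto (p n + p k)
    have hnk : (p n - p k = 0) ↔ n = k := by
      constructor
      · intro h; exact hmono.injective (by linarith [sub_eq_zero.mp h])
      · rintro rfl; ring
    have hpk : p n + p k ≠ 0 := (by linarith [hpos n, hpos k] : (0:ℝ) < p n + p k).ne'
    rw [if_neg hpk] at h2
    have := h1.add h2
    rw [add_zero] at this
    have hiff : (if p n - p k = 0 then (1:ℝ) else 0) = (if n = k then 1 else 0) := by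
      rcases eq_or_ne n k with rfl | h
      · rw [if_pos rfl, if_pos (by ring)]
      · rw [if_neg h, if_neg (fun hh => h (hnk.mp hh))]
    rw [hiff] at this
    refine Tendsto.congr' ?_ this
    filter_upwards [eventually_ne_atTop 0] with T hT
    exact (hform T hT).symm
  -- Step 3: dominated convergence for the sum
  have hbound : ∀ T : ℝ, 0 < T → ∀ n, ‖α n * (2 / T * c n T)‖ ≤ |α n| * 2 := by
    intro T hT n
    rw [norm_mul, Real.norm_eq_abs (α n)]
    gcongr
    have h1 : ‖c n T‖ ≤ 1 * |T - 0| := by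
      apply intervalIntegral.norm_integral_le_of_norm_le_const
      intro x _
      rw [norm_mul]
      calc ‖Real.cos (p n * x)‖ * ‖Real.cos (p k * x)‖ ≤ 1 * 1 := by
            gcongr <;> [exact Real.abs_cos_le_one _; exact Real.abs_cos_le_one _]
        _ = 1 := one_mul 1
    rw [sub_zero, one_mul, abs_of_pos hT] at h1
    rw [norm_mul, Real.norm_eq_abs, Real.norm_eq_abs, abs_div]
    rw [abs_of_pos hT, abs_two]
    calc 2 / T * |c n T| ≤ 2 / T * T := by gcongr; rw [← Real.norm_eq_abs]; exact h1
      _ = 2 := by field_simp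
  have main : Tendsto (fun T : ℝ => ∑' n, α n * (2 / T * c n T)) atTop
      (𝓝 (∑' n, α n * (if n = k then 1 else 0))) := by
    apply tendsto_tsum_of_dominated_convergence (hsum.mul_right 2)
    · intro n; exact (hlim n).const_mul (α n)
    · filter_upwards [eventually_gt_atTop 0] with T hT
      exact hbound T hT
  have h0 : Tendsto (fun T : ℝ => ∑' n, α n * (2 / T * c n T)) atTop (𝓝 0) := by
    refine Tendsto.congr' ?_ tendsto_const_nhds
    filter_upwards [eventually_gt_atTop 0] with T hT
    exact (hzeroT T hT).symm
  have hfinal := tendsto_nhds_unique main h0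
  rw [tsum_eq_single k (fun b hb => by rw [if_neg hb, mul_zero])] at hfinal
  rwa [if_pos rfl, mul_one] at hfinal
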